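/- Let K be a field, let n ≥ 3 and k ≥ 1 be integers, and let R = K[V(T_{n,k})]. Then the Krull dimension of R/I(T_{n,k}) equals ((n−1)^{k+1} − 1)/(n − 2). -/

import Mathlib

open MvPolynomial

/-- Level sizes of the perfect semiregular tree `T_{n,k}`. -/
def semiLevel (n : ℕ) : ℕ → ℕ
  | 0 => 1
  | a + 1 => n * (n - 1) ^ a

/-- Vertices of the perfect semiregular tree `T_{n,k}`. -/
abbrev SemiVert (n k : ℕ) : Type := Σ a : Fin (k + 1), Fin (semiLevel n (a : ℕ))

/-- The perfect semiregular tree `T_{n,k}`: every internal (non-pendant) vertex has degree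
`n` and every pendant vertex is at distance `k` from the root.  The vertex `j` at level
`a+1` is a child of vertex `j/(n-1)` at level `a` (of the root when `a = 0`). -/
def semiTree (n k : ℕ) : SimpleGraph (SemiVert n k) :=
  SimpleGraph.fromRel (fun v w =>
    (v.1 : ℕ) + 1 = (w.1 : ℕ) ∧ ((v.1 : ℕ) = 0 ∨ (v.2 : ℕ) = (w.2 : ℕ) / (n - 1)))

/-- The edge ideal `I(G)` of a graph `G`, inside the polynomial ring over `K`
with variables the vertices of `G`. -/
noncomputable def edgeIdeal (K : Type) [Field K] {V : Type} (G : SimpleGraph V) :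
    Ideal (MvPolynomial V K) :=
  Ideal.span {p | ∃ v w, G.Adj v w ∧ p = X v * X w}


section DimTheory

variable {K : Type} [Field K]

/-- Lift algebraic independence through a nonzero prime, gaining one element. -/
theorem exists_algInd_succ {B : Type} [CommRing B] [IsDomain B] [Algebra K B]
    {d : ℕ} (P : Ideal B) [hPp : P.IsPrime] (hP : P ≠ ⊥)
    {y : Fin d → B ⧸ P} (hy : AlgebraicIndependent K y) :
    ∃ z : Fin (d + 1) → B, AlgebraicIndependent K z := by
  obtain ⟨a, haP, ha0⟩ := (Submodule.ne_bot_iff P).1 hP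
  choose yl hyl using fun i => Ideal.Quotient.mk_surjective (y i)
  refine ⟨Fin.cons a yl, ?_⟩
  set z : Fin (d+1) → B := Fin.cons a yl with hz
  rw [algebraicIndependent_iff]
  intro p hp
  -- ring hom identity
  set φ : MvPolynomial (Fin d) K →+* B := (MvPolynomial.aeval yl).toRingHom with hφ
  have hFz : ∀ q : MvPolynomial (Fin (d+1)) K,
      (MvPolynomial.aeval z) q
        = Polynomial.eval a (Polynomial.map φ (MvPolynomial.finSuccEquiv K d q)) := by
    intro q
    have : (MvPolynomial.aeval z).toRingHom =
        ((Polynomial.evalRingHom a).comp ((Polynomial.mapRingHom φ).comp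
          (MvPolynomial.finSuccEquiv K d : MvPolynomial (Fin (d+1)) K →+* _))) := by
      apply MvPolynomial.ringHom_ext
      · intro r
        simp [φ, MvPolynomial.finSuccEquiv_apply]
      · intro i
        refine Fin.cases ?_ ?_ i
        · simp [z, MvPolynomial.finSuccEquiv_X_zero]
        · intro j
          simp [z, MvPolynomial.finSuccEquiv_X_succ, φ]
    exact congrArg (fun f => f q) (congrArg DFunLike.coe this)
  -- key claim by induction on natDegree
  have key : ∀ N (q : Polynomial (MvPolynomial (Fin d) K)), q.natDegree ≤ N →
      Polynomial.eval a (Polynomial.map φ q) = 0 → q = 0 := by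
    intro N
    induction N with
    | zero => ?_
    | succ N ih => ?_
    all_goals {
      intro q hdeg heval
      by_contra hq0
      -- constant coefficient dies
      have hc0 : q.coeff 0 = 0 := by
        have h1 : (Ideal.Quotient.mk P) (Polynomial.eval a (Polynomial.map φ q)) = 0 := by
          rw [heval]; simp
        rw [Polynomial.eval_map, Polynomial.hom_eval₂] at h1
        have ha' : (Ideal.Quotient.mk P) a = 0 := (Ideal.Quotient.eq_zero_iff_mem).2 haP
        rw [ha', Polynomial.eval₂_at_zero] at h1
        have h2 := h1
        -- (mk P).comp φ = aeval y
        have hcomp : (Ideal.Quotient.mk P).comp φ = (MvPolynomial.aeval y).toRingHom := by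
          apply MvPolynomial.ringHom_ext
          · intro r; simp [φ]
          · intro i; simp [φ, hyl]
        rw [hcomp] at h2
        exact hy.eq_zero_of_aeval_eq_zero _ h2
      obtain ⟨q', hq'⟩ := (Polynomial.X_dvd_iff).2 hc0
      have hq'0 : q' ≠ 0 := by rintro rfl; simp at hq'; exact hq0 hq'
      have heval' : Polynomial.eval a (Polynomial.map φ q') = 0 := by
        rw [hq', Polynomial.map_mul, Polynomial.eval_mul, Polynomial.map_X,
          Polynomial.eval_X] at heval
        rcases mul_eq_zero.1 heval with h | h
        · exact absurd h ha0
        · exact h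
      have hdeg' : q.natDegree = q'.natDegree + 1 := by
        rw [hq', Polynomial.natDegree_mul Polynomial.X_ne_zero hq'0]
        simp [Polynomial.natDegree_X]; omega
      first
      | omega
      | (exact hq0 (by rw [hq']; rw [ih q' (by omega) heval']; ring))
    }
  have := key (MvPolynomial.finSuccEquiv K d p).natDegree _ le_rfl (by rw [← hFz]; exact hp)
  have h0 : (MvPolynomial.finSuccEquiv K d) p = (MvPolynomial.finSuccEquiv K d) 0 := by
    simpa using this
  exact (MvPolynomial.finSuccEquiv K d).injective h0

/-- A strict chain of primes of length `r` in a domain yields `r` algebraically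
independent elements. -/
theorem exists_algInd_of_chain :
    ∀ (r : ℕ) (B : Type) [CommRing B] [IsDomain B] [Algebra K B]
    (Q : Fin (r + 1) → Ideal B), (∀ i, (Q i).IsPrime) → StrictMono Q →
    ∃ z : Fin r → B, AlgebraicIndependent K z := by
  intro r
  induction r with
  | zero =>
    intro B _ _ _ Q _ _
    exact ⟨Fin.elim0, algebraicIndependent_empty_type⟩
  | succ r ih =>
    intro B _ _ _ Q hQp hQm
    have hP1 : (Q 1).IsPrime := hQp 1
    have h01 : Q 0 < Q 1 := hQm (by
      show (0 : Fin (r+2)) < 1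
      simp [Fin.lt_def])
    have hne : Q 1 ≠ ⊥ := by
      intro h
      exact absurd (h ▸ h01) (by simp)
    set P := Q 1 with hPdef
    have hker : RingHom.ker (Ideal.Quotient.mk P) = P := Ideal.mk_ker
    have hle : ∀ i : Fin (r + 1), P ≤ Q i.succ := by
      intro i
      apply hQm.monotone
      show (1 : Fin (r+2)) ≤ i.succ
      rw [Fin.le_def]
      simp only [Fin.val_one, Fin.val_succ]
      omega
    set Q' : Fin (r + 1) → Ideal (B ⧸ P) :=
      fun i => (Q i.succ).map (Ideal.Quotient.mk P) with hQ'
    have hQ'p : ∀ i, (Q' i).IsPrime := by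
      intro i
      exact Ideal.map_isPrime_of_surjective Ideal.Quotient.mk_surjective
        (by rw [hker]; exact hle i)
    have hcm : ∀ i : Fin (r+1), (Q' i).comap (Ideal.Quotient.mk P) = Q i.succ := by
      intro i
      rw [hQ', Ideal.comap_map_of_surjective _ Ideal.Quotient.mk_surjective]
      rw [← RingHom.ker_eq_comap_bot, hker]
      exact sup_eq_left.2 (hle i)
    have hQ'm : StrictMono Q' := by
      intro i j hij
      have hij' : Q i.succ < Q j.succ := hQm (by
        rw [Fin.lt_def] at hij ⊢
        simp only [Fin.val_succ]
        omega)
      constructor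
      · exact le_trans (le_of_eq (by rw [hQ'])) (Ideal.map_mono hij'.le)
      · intro hji
        have := Ideal.comap_mono (f := Ideal.Quotient.mk P) hji
        rw [hcm i, hcm j] at this
        exact absurd (le_antisymm hij'.le this) hij'.ne
    obtain ⟨y, hy⟩ := ih (B ⧸ P) Q' hQ'p hQ'm
    exact exists_algInd_succ P hne hy

/-- Growth bound: products of powers of algebraically independent polynomials are
linearly independent and live in a bounded-degree space. -/
theorem algInd_growth {τ : Type} [Fintype τ] {r : ℕ} {z : Fin r → MvPolynomial τ K}
    (hz : AlgebraicIndependent K z) (D : ℕ) (hD : ∀ i, (z i).totalDegree ≤ D) (t : ℕ) :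
    (t + 1) ^ r ≤ (r * t * D + 1) ^ Fintype.card τ := by
  classical
  set N := r * t * D with hN
  set g : (τ → Fin (N + 1)) → MvPolynomial τ K :=
    fun f => monomial (Finsupp.equivFunOnFinite.symm fun x => (f x : ℕ)) (1 : K) with hg
  set W : Set (MvPolynomial τ K) := Set.range g with hW
  haveI : Fintype W := Set.fintypeRange g
  -- the linearly independent family
  set u : (Fin r → Fin (t + 1)) → MvPolynomial (Fin r) K :=
    fun e => monomial (Finsupp.equivFunOnFinite.symm fun i => (e i : ℕ)) (1 : K) with hu
  have hulin : LinearIndependent K u := by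
    have hbase := (basisMonomials (Fin r) K).linearIndependent
    have h2 := hbase.comp (fun e : Fin r → Fin (t+1) =>
        (Finsupp.equivFunOnFinite.symm fun i => (e i : ℕ))) (by
      intro e e' hee
      have := Finsupp.equivFunOnFinite.symm.injective hee
      funext i
      exact Fin.val_injective (congrFun this i))
    have h3 : (⇑(basisMonomials (Fin r) K) ∘ fun e : Fin r → Fin (t+1) =>
        (Finsupp.equivFunOnFinite.symm fun i => (e i : ℕ))) = u := by
      funext e
      simp [hu, coe_basisMonomials]
    rwa [h3] at h2
  set v : (Fin r → Fin (t + 1)) → MvPolynomial τ K := fun e => ∏ i, z i ^ (e i : ℕ) with hv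
  have hvu : v = ⇑(MvPolynomial.aeval z).toLinearMap ∘ u := by
    funext e
    simp only [hv, hu, Function.comp_apply, AlgHom.toLinearMap_apply, aeval_monomial, map_one,
      one_mul]
    rw [Finsupp.prod_pow]
    simp
  have hvlin : LinearIndependent K v := by
    rw [hvu]
    exact hulin.map' _ (LinearMap.ker_eq_bot.2 (algebraicIndependent_iff_injective_aeval.1 hz))
  -- each v e lies in the span of W
  have hspan : Set.range v ≤ Submodule.span K W := by
    rintro _ ⟨e, rfl⟩
    have hdeg : (v e).totalDegree ≤ N := by
      calc (v e).totalDegree ≤ ∑ i, (z i ^ (e i : ℕ)).totalDegree :=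
            totalDegree_finset_prod _ _
        _ ≤ ∑ i : Fin r, t * D := by
            apply Finset.sum_le_sum
            intro i _
            exact le_trans (totalDegree_pow _ _)
              (Nat.mul_le_mul (Nat.le_of_lt_succ (e i).isLt) (hD i))
        _ = r * t * D := by simp [Finset.sum_const, mul_assoc]
    rw [(v e).as_sum]
    apply Submodule.sum_mem
    intro s hs
    have hsx : ∀ x, s x ≤ N := by
      intro x
      refine le_trans ?_ (le_trans (le_totalDegree hs) hdeg)
      by_cases hxs : x ∈ s.support
      · exact Finset.single_le_sum (f := fun a => s a) (fun _ _ => Nat.zero_le _) hxs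
      · simp [Finsupp.notMem_support_iff.1 hxs]
    have : monomial s (coeff s (v e)) = (coeff s (v e)) • monomial s (1 : K) := by
      rw [smul_monomial, smul_eq_mul, mul_one]
    rw [this]
    apply Submodule.smul_mem
    apply Submodule.subset_span
    refine ⟨fun x => ⟨s x, Nat.lt_succ_of_le (hsx x)⟩, ?_⟩
    simp only [hg]
    have hss : (Finsupp.equivFunOnFinite.symm fun x => s x) = s :=
      Finsupp.equivFunOnFinite.symm_apply_apply s
    exact congrArg (fun w => monomial w (1:K)) hss
  have hcard := linearIndependent_le_span' v hvlin W hspan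
  have hc1 : (Fintype.card (Fin r → Fin (t+1)) : Cardinal) ≤ Fintype.card W := by
    rw [← Cardinal.mk_fintype]
    exact hcard
  have hc2 : Fintype.card (Fin r → Fin (t+1)) ≤ Fintype.card W := by
    exact_mod_cast hc1
  have hc3 : Fintype.card W ≤ (N + 1) ^ Fintype.card τ := by
    calc Fintype.card W ≤ Fintype.card (τ → Fin (N+1)) := Fintype.card_range_le g
      _ = (N + 1) ^ Fintype.card τ := by simp [Fintype.card_fun]
  calc (t+1)^r = Fintype.card (Fin r → Fin (t+1)) := by simp [Fintype.card_fun]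
    _ ≤ (N + 1) ^ Fintype.card τ := le_trans hc2 hc3

/-- An algebraically independent family in a polynomial ring over a field has size at most
the number of variables. -/
theorem algInd_card_le {τ : Type} [Fintype τ] {r : ℕ} {z : Fin r → MvPolynomial τ K}
    (hz : AlgebraicIndependent K z) : r ≤ Fintype.card τ := by
  by_contra hc
  push_neg at hc
  set m := Fintype.card τ with hm
  have hle : m + 1 ≤ r := hc
  set z' : Fin (m+1) → MvPolynomial τ K := z ∘ Fin.castLE hle with hz'
  have hz'i : AlgebraicIndependent K z' := hz.comp _ (Fin.castLE_injective hle)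
  set D : ℕ := Finset.univ.sup fun i => (z' i).totalDegree with hDdef
  set t : ℕ := ((m+1) * D + 1) ^ m with ht
  have hgrow := algInd_growth hz'i D
    (fun i => Finset.le_sup (f := fun i => (z' i).totalDegree) (Finset.mem_univ i)) t
  rw [← hm] at hgrow
  have h1 : (m+1) * t * D + 1 ≤ ((m+1) * D + 1) * (t+1) := by nlinarith
  have h2 : ((m+1) * t * D + 1) ^ m ≤ (((m+1) * D + 1) * (t+1)) ^ m :=
    Nat.pow_le_pow_left h1 m
  rw [mul_pow] at h2
  have h3 : (t+1) ^ (m+1) ≤ t * (t+1) ^ m := le_trans hgrow (le_trans h2 (by rw [ht]))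
  have h4 : t * (t+1) ^ m < (t+1) * (t+1) ^ m :=
    Nat.mul_lt_mul_of_pos_right (Nat.lt_succ_self t) (pow_pos t.succ_pos m)
  rw [pow_succ] at h3
  rw [mul_comm (t+1) ((t+1)^m)] at h4
  omega

/-- The polynomial ring over a field in finitely many variables has Krull dimension at least
the number of variables. -/
theorem card_le_ringKrullDim_mvPolynomial (σ : Type) [Fintype σ] :
    (Fintype.card σ : WithBot (WithTop ℕ)) ≤ ringKrullDim (MvPolynomial σ K) := by
  classical
  set s := Fintype.card σ with hs
  set ε := Fintype.equivFin σ with hε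
  -- killing maps
  set killer : ℕ → (MvPolynomial σ K →ₐ[K] MvPolynomial σ K) :=
    fun i => MvPolynomial.aeval (fun v => if (ε v : ℕ) < i then 0 else X v) with hkiller
  have hcomp : ∀ i j : ℕ, i ≤ j → ∀ p, killer j (killer i p) = killer j p := by
    intro i j hij p
    have : (killer j).comp (killer i) = killer j := by
      apply MvPolynomial.algHom_ext
      intro v
      by_cases h : (ε v : ℕ) < i
      · simp [hkiller, h, show (ε v : ℕ) < j by omega]
      · by_cases h2 : (ε v : ℕ) < j <;> simp [hkiller, h, h2]
    exact congrArg (fun f => f p) (congrArg DFunLike.coe this)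
  set P : Fin (s + 1) → PrimeSpectrum (MvPolynomial σ K) :=
    fun i => ⟨RingHom.ker (killer (i : ℕ)).toRingHom, RingHom.ker_isPrime _⟩ with hP
  have hmono : StrictMono P := by
    intro i j hij
    have hij' : (i : ℕ) < (j : ℕ) := hij
    constructor
    · show P i ≤ P j
      intro p hp
      have hp0 : killer (i : ℕ) p = 0 := hp
      show killer (j : ℕ) p = 0
      rw [← hcomp _ _ (le_of_lt hij') p, hp0, map_zero]
    · intro hle
      have hi : (i : ℕ) < s := by
        have := j.isLt; omega
      set v0 := ε.symm ⟨(i : ℕ), hi⟩ with hv0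
      have h1 : X v0 ∈ (P j).asIdeal := by
        show killer (j : ℕ) (X v0) = 0
        simp [hkiller, hv0, hij']
      have h2 : X v0 ∉ (P i).asIdeal := by
        show ¬ killer (i : ℕ) (X v0) = 0
        simp [hkiller, hv0, MvPolynomial.X_ne_zero]
      exact h2 (hle h1)
  have := Order.LTSeries.length_le_krullDim ⟨s, P, fun i => hmono (by simp [Fin.castSucc_lt_succ_iff])⟩
  exact this

end DimTheory

namespace SemiAux

variable {n k : ℕ}

theorem vert_ext {x y : SemiVert n k} (h1 : (x.1 : ℕ) = (y.1 : ℕ))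
    (h2 : (x.2 : ℕ) = (y.2 : ℕ)) : x = y := by
  obtain ⟨a, b⟩ := x
  obtain ⟨c, d⟩ := y
  simp only at h1 h2
  have hac : a = c := Fin.ext h1
  subst hac
  have : b = d := Fin.ext h2
  subst this
  rfl

theorem adj_levels {v w : SemiVert n k} (h : (semiTree n k).Adj v w) :
    (v.1 : ℕ) + 1 = (w.1 : ℕ) ∨ (w.1 : ℕ) + 1 = (v.1 : ℕ) := by
  rw [semiTree, SimpleGraph.fromRel_adj] at h
  rcases h.2 with ⟨h1, _⟩ | ⟨h1, _⟩
  · exact Or.inl h1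
  · exact Or.inr h1

theorem adj_parity {v w : SemiVert n k} (h : (semiTree n k).Adj v w) :
    ¬ ((v.1 : ℕ) % 2 = k % 2 ↔ (w.1 : ℕ) % 2 = k % 2) := by
  rcases adj_levels h with h1 | h1 <;> omega

/-- The first child of a non-leaf vertex. -/
def child (hn : 3 ≤ n) (v : SemiVert n k) (h : (v.1 : ℕ) < k) : SemiVert n k :=
  ⟨⟨(v.1 : ℕ) + 1, by omega⟩, ⟨(v.2 : ℕ) * (n - 1), by
    have hlt := v.2.isLt
    show (v.2 : ℕ) * (n - 1) < semiLevel n ((v.1 : ℕ) + 1)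
    obtain ⟨c, hvb⟩ : ∃ c, (v.2 : ℕ) = c := ⟨_, rfl⟩
    obtain ⟨a, hva⟩ : ∃ a, (v.1 : ℕ) = a := ⟨_, rfl⟩
    rw [hvb, hva] at hlt
    rw [hvb, hva]
    cases a with
    | zero =>
      simp only [semiLevel] at hlt ⊢
      have hc0 : c = 0 := by omega
      rw [hc0]
      simp only [pow_zero, mul_one, zero_mul]
      omega
    | succ b =>
      simp only [semiLevel] at hlt ⊢
      calc c * (n - 1) < (n * (n-1)^b) * (n - 1) :=
            Nat.mul_lt_mul_of_lt_of_le hlt le_rfl (by omega)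
        _ = n * (n-1)^(b+1) := by ring
    ⟩⟩

theorem child_fst (hn : 3 ≤ n) (v : SemiVert n k) (h : (v.1 : ℕ) < k) :
    ((child hn v h).1 : ℕ) = (v.1 : ℕ) + 1 := rfl

theorem child_snd (hn : 3 ≤ n) (v : SemiVert n k) (h : (v.1 : ℕ) < k) :
    ((child hn v h).2 : ℕ) = (v.2 : ℕ) * (n - 1) := rfl

theorem child_adj (hn : 3 ≤ n) (v : SemiVert n k) (h : (v.1 : ℕ) < k) :
    (semiTree n k).Adj v (child hn v h) := by
  rw [semiTree, SimpleGraph.fromRel_adj]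
  constructor
  · intro hvc
    have := congrArg (fun x : SemiVert n k => (x.1 : ℕ)) hvc
    simp only [child_fst] at this
    omega
  · left
    refine ⟨child_fst hn v h, Or.inr ?_⟩
    rw [child_snd]
    rw [Nat.mul_div_cancel _ (by omega : 0 < n - 1)]

/-- Any independent set of the tree is at most as large as the set `S` of vertices
whose level has the same parity as `k`. -/
theorem indep_card_le (hn : 3 ≤ n) (A : Set (SemiVert n k))
    (hA : ∀ v ∈ A, ∀ w ∈ A, ¬ (semiTree n k).Adj v w) :
    Nat.card A ≤ Nat.card {v : SemiVert n k // (v.1 : ℕ) % 2 = k % 2} := by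
  classical
  have hlt : ∀ v : SemiVert n k, ¬ ((v.1 : ℕ) % 2 = k % 2) → (v.1 : ℕ) < k := by
    intro v hv
    have := v.1.isLt
    omega
  set F : (v : SemiVert n k) → {v : SemiVert n k // (v.1 : ℕ) % 2 = k % 2} := fun v =>
    if h : (v.1 : ℕ) % 2 = k % 2 then ⟨v, h⟩
    else ⟨child hn v (hlt _ h), by rw [child_fst]; omega⟩
    with hF
  set f : A → {v : SemiVert n k // (v.1 : ℕ) % 2 = k % 2} := fun x => F x.1 with hf
  have hinj : Function.Injective f := by
    rintro ⟨v, hv⟩ ⟨w, hw⟩ hvw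
    have hvw : F v = F w := hvw
    rw [hF] at hvw
    dsimp only at hvw
    by_cases h1 : (v.1 : ℕ) % 2 = k % 2 <;> by_cases h2 : (w.1 : ℕ) % 2 = k % 2
    · rw [dif_pos h1, dif_pos h2] at hvw
      have : v = w := congrArg Subtype.val hvw
      exact Subtype.ext this
    · rw [dif_pos h1, dif_neg h2] at hvw
      have : v = child hn w (hlt _ h2) := congrArg Subtype.val hvw
      exact absurd (this ▸ child_adj hn w (hlt _ h2)) (hA w hw v hv)
    · rw [dif_neg h1, dif_pos h2] at hvw
      have : child hn v (hlt _ h1) = w := congrArg Subtype.val hvw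
      exact absurd (this ▸ child_adj hn v (hlt _ h1)) (hA v hv w hw)
    · rw [dif_neg h1, dif_neg h2] at hvw
      have hcc : child hn v (hlt _ h1) = child hn w (hlt _ h2) :=
        congrArg Subtype.val hvw
      have e1 : ((child hn v (hlt _ h1)).1 : ℕ) = ((child hn w (hlt _ h2)).1 : ℕ) := by
        rw [hcc]
      have e2 : ((child hn v (hlt _ h1)).2 : ℕ) = ((child hn w (hlt _ h2)).2 : ℕ) := by
        rw [hcc]
      rw [child_fst, child_fst] at e1
      rw [child_snd, child_snd] at e2
      apply Subtype.ext
      show v = w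
      apply vert_ext (by omega)
      have : 0 < n - 1 := by omega
      exact Nat.eq_of_mul_eq_mul_right this e2
  exact Nat.card_le_card_of_injective f hinj

/-- The alternating level sum equals the full geometric sum in `n - 1`. -/
theorem sum_alt (m : ℕ) : ∀ k : ℕ,
    ∑ a ∈ Finset.range (k + 1), (if a % 2 = k % 2 then semiLevel (m + 1) a else 0)
      = ∑ j ∈ Finset.range (k + 1), m ^ j
  | 0 => by simp [semiLevel]
  | 1 => by
    rw [Finset.sum_range_succ, Finset.sum_range_succ]
    norm_num [semiLevel]
  | (k + 2) => by
    rw [Finset.sum_range_succ, Finset.sum_range_succ (n := k + 1)]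
    have hmid : ¬ ((k + 1) % 2 = (k + 2) % 2) := by omega
    rw [if_neg hmid, if_pos rfl]
    have hcong : ∀ a ∈ Finset.range (k + 1),
        (if a % 2 = (k + 2) % 2 then semiLevel (m + 1) a else 0)
          = (if a % 2 = k % 2 then semiLevel (m + 1) a else 0) := by
      intro a _
      by_cases h : a % 2 = k % 2
      · rw [if_pos h, if_pos (by omega)]
      · rw [if_neg h, if_neg (by omega)]
    rw [Finset.sum_congr rfl hcong, sum_alt m k]
    rw [Finset.sum_range_succ (n := k + 2), Finset.sum_range_succ (n := k + 1)]
    have : semiLevel (m + 1) (k + 2) = m ^ (k + 1) + m ^ (k + 2) := by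
      show (m + 1) * m ^ (k + 1) = m ^ (k + 1) + m ^ (k + 2)
      ring
    rw [this]
    ring

theorem geom_div (m : ℕ) (hm : 2 ≤ m) (k : ℕ) :
    ∑ j ∈ Finset.range (k + 1), m ^ j = (m ^ (k + 1) - 1) / (m - 1) := by
  have hmul : (m - 1) * ∑ j ∈ Finset.range (k + 1), m ^ j = m ^ (k + 1) - 1 := by
    induction k with
    | zero => simp
    | succ k ih =>
      rw [Finset.sum_range_succ, Nat.mul_add, ih]
      have h1 : 1 ≤ m ^ (k + 1) := Nat.one_le_pow _ _ (by omega)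
      have h2 : m ^ (k + 1) ≤ m ^ (k + 2) := Nat.pow_le_pow_right (by omega) (by omega)
      have h3 : (m - 1) * m ^ (k + 1) = m ^ (k + 2) - m ^ (k + 1) := by
        rw [Nat.sub_mul, one_mul, ← pow_succ']
      have h4 : m ^ (k + 1 + 1) = m ^ (k + 2) := rfl
      omega
  rw [← hmul, Nat.mul_div_cancel_left _ (by omega : 0 < m - 1)]

/-- Cardinality of the parity-`k` level set. -/
theorem card_S (n k : ℕ) (hn : 3 ≤ n) :
    Nat.card {v : SemiVert n k // (v.1 : ℕ) % 2 = k % 2}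
      = ((n - 1) ^ (k + 1) - 1) / (n - 2) := by
  classical
  rw [Nat.card_eq_fintype_card, Fintype.card_subtype]
  have h1 : (Finset.filter (fun v : SemiVert n k => (v.1 : ℕ) % 2 = k % 2)
      Finset.univ).card
      = ∑ a : Fin (k + 1), (if (a : ℕ) % 2 = k % 2 then semiLevel n (a : ℕ) else 0) := by
    rw [Finset.card_filter]
    rw [← Finset.univ_sigma_univ, Finset.sum_sigma]
    apply Finset.sum_congr rfl
    intro a _
    by_cases h : (a : ℕ) % 2 = k % 2
    · simp [h]
    · simp [h]
  rw [h1, Fin.sum_univ_eq_sum_range (fun a => if a % 2 = k % 2 then semiLevel n a else 0)]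
  obtain ⟨m, rfl⟩ : ∃ m, n = m + 1 := ⟨n - 1, by omega⟩
  have h2 : m + 1 - 1 = m := by omega
  have h3 : m + 1 - 2 = m - 1 := by omega
  rw [h2, h3, sum_alt m k, geom_div m (by omega) k]

end SemiAux

section Assembly

variable (K : Type) [Field K] (n k : ℕ)

local notation "V" => SemiVert n k
local notation "R" => MvPolynomial (SemiVert n k) K
local notation "I" => edgeIdeal K (semiTree n k)

/-- Upper bound. -/
theorem semi_upper (hn : 3 ≤ n) :
    ringKrullDim (R ⧸ I) ≤ ((Nat.card {v : SemiVert n k // (v.1 : ℕ) % 2 = k % 2} : ℕ) : WithBot (WithTop ℕ)) := by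
  classical
  show Order.krullDim (PrimeSpectrum (R ⧸ I)) ≤ _
  rw [Order.krullDim]
  apply iSup_le
  intro p
  suffices h : p.length ≤ Nat.card {v : SemiVert n k // (v.1 : ℕ) % 2 = k % 2} by exact_mod_cast Nat.cast_le.mpr h
  -- pull the chain back to R
  set mkI : R →+* R ⧸ I := Ideal.Quotient.mk I with hmkI
  set P : Fin (p.length + 1) → Ideal R := fun i => (p.toFun i).asIdeal.comap mkI with hP
  have hPprime : ∀ i, (P i).IsPrime := fun i => Ideal.IsPrime.comap _
  have hPmono : StrictMono P := by
    intro i j hij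
    have hlt : p.toFun i < p.toFun j := p.strictMono hij
    constructor
    · exact Ideal.comap_mono (le_of_lt hlt)
    · intro hji
      have := Ideal.comap_injective_of_surjective mkI Ideal.Quotient.mk_surjective
        (le_antisymm (Ideal.comap_mono (le_of_lt hlt)) hji)
      exact absurd (PrimeSpectrum.ext this) (ne_of_lt hlt)
  have hIP : ∀ i, I ≤ P i := by
    intro i
    calc I = RingHom.ker mkI := Ideal.mk_ker.symm
      _ ≤ P i := Ideal.ker_le_comap _
  -- the vertex cover coming from the bottom prime
  set C : Set V := {v | X v ∈ P 0} with hC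
  have hcover : ∀ v w : V, (semiTree n k).Adj v w → v ∈ C ∨ w ∈ C := by
    intro v w hadj
    have hmem : (X v * X w : R) ∈ P 0 := hIP 0 (Ideal.subset_span ⟨v, w, hadj, rfl⟩)
    exact (hPprime 0).mem_or_mem hmem
  set τ := {v : V // v ∉ C} with hτ
  -- the complement of the cover is independent
  have hindep : ∀ v ∈ {v : V | v ∉ C}, ∀ w ∈ {v : V | v ∉ C}, ¬ (semiTree n k).Adj v w := by
    intro v hv w hw hadj
    rcases hcover v w hadj with h | h
    · exact hv h
    · exact hw h
  have hcard1 : Nat.card τ ≤ Nat.card {v : SemiVert n k // (v.1 : ℕ) % 2 = k % 2} := SemiAux.indep_card_le hn _ hindep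
  -- the ideal generated by the cover variables
  set J : Ideal R := Ideal.span (MvPolynomial.X '' C) with hJ
  have hJP : ∀ i, J ≤ P i := by
    intro i
    rw [hJ, Ideal.span_le]
    rintro _ ⟨v, hv, rfl⟩
    exact (hPmono.monotone (Fin.zero_le i)) hv
  -- surjection from the polynomial ring on the complement
  set f : MvPolynomial τ K →ₐ[K] R ⧸ J :=
    (Ideal.Quotient.mkₐ K J).comp (MvPolynomial.rename Subtype.val) with hfdef
  have hfsurj : Function.Surjective f := by
    rw [← AlgHom.range_eq_top]
    have h1 : Algebra.adjoin K ((Ideal.Quotient.mkₐ K J) '' Set.range (X : V → R)) = ⊤ := by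
      rw [← AlgHom.map_adjoin, MvPolynomial.adjoin_range_X, Algebra.map_top,
        AlgHom.range_eq_top]
      exact Ideal.Quotient.mkₐ_surjective K J
    rw [eq_top_iff, ← h1]
    apply Algebra.adjoin_le
    rintro _ ⟨_, ⟨v, rfl⟩, rfl⟩
    show (Ideal.Quotient.mkₐ K J) (X v) ∈ f.range
    by_cases hv : v ∈ C
    · have hXv : (X v : MvPolynomial V K) ∈ J := Ideal.subset_span (Set.mem_image_of_mem _ hv)
      have hz : (Ideal.Quotient.mkₐ K J) (X v) = 0 := by
        rw [Ideal.Quotient.mkₐ_eq_mk]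
        exact Ideal.Quotient.eq_zero_iff_mem.2 hXv
      rw [hz]
      exact Subalgebra.zero_mem _
    · exact ⟨X (⟨v, hv⟩ : τ), by simp [hfdef]⟩
  -- push the chain to R/J and pull back along f
  set mkJ : R →+* R ⧸ J := Ideal.Quotient.mk J with hmkJ
  set P' : Fin (p.length + 1) → Ideal (R ⧸ J) := fun i => (P i).map mkJ with hP'
  have hP'p : ∀ i, (P' i).IsPrime := fun i =>
    Ideal.map_isPrime_of_surjective Ideal.Quotient.mk_surjective
      (by rw [Ideal.mk_ker]; exact hJP i)
  have hcm : ∀ i, (P' i).comap mkJ = P i := by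
    intro i
    rw [hP', Ideal.comap_map_of_surjective _ Ideal.Quotient.mk_surjective,
      ← RingHom.ker_eq_comap_bot, Ideal.mk_ker]
    exact sup_eq_left.2 (hJP i)
  have hP'mono : StrictMono P' := by
    intro i j hij
    constructor
    · exact Ideal.map_mono (le_of_lt (hPmono hij))
    · intro hji
      have := Ideal.comap_mono (f := mkJ) hji
      rw [hcm i, hcm j] at this
      exact absurd (le_antisymm (le_of_lt (hPmono hij)) this) (ne_of_lt (hPmono hij))
  set Q : Fin (p.length + 1) → Ideal (MvPolynomial τ K) :=
    fun i => (P' i).comap f.toRingHom with hQ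
  have hQp : ∀ i, (Q i).IsPrime := by
    intro i
    haveI := hP'p i
    exact Ideal.IsPrime.comap _
  have hQmono : StrictMono Q := by
    intro i j hij
    constructor
    · exact Ideal.comap_mono (le_of_lt (hP'mono hij))
    · intro hji
      have := Ideal.comap_injective_of_surjective f.toRingHom hfsurj
        (le_antisymm (Ideal.comap_mono (le_of_lt (hP'mono hij))) hji)
      exact absurd this (ne_of_lt (hP'mono hij))
  obtain ⟨z, hz⟩ := exists_algInd_of_chain (K := K) p.length (MvPolynomial τ K) Q hQp hQmono
  have := algInd_card_le hz
  rw [← Nat.card_eq_fintype_card] at this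
  omega

/-- Lower bound. -/
theorem semi_lower (hn : 3 ≤ n) :
    ((Nat.card {v : SemiVert n k // (v.1 : ℕ) % 2 = k % 2} : ℕ) : WithBot (WithTop ℕ)) ≤ ringKrullDim (R ⧸ I) := by
  classical
  set g : R →ₐ[K] MvPolynomial {v : SemiVert n k // (v.1 : ℕ) % 2 = k % 2} K :=
    MvPolynomial.aeval (fun v : V => if h : (v.1 : ℕ) % 2 = k % 2
      then X (⟨v, h⟩ : {v : SemiVert n k // (v.1 : ℕ) % 2 = k % 2}) else 0) with hg
  have hgsec : ∀ q : MvPolynomial {v : SemiVert n k // (v.1 : ℕ) % 2 = k % 2} K, g (MvPolynomial.rename Subtype.val q) = q := by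
    intro q
    have : (g.comp (MvPolynomial.rename (Subtype.val : {v : SemiVert n k // (v.1 : ℕ) % 2 = k % 2} → V))) =
        AlgHom.id K (MvPolynomial {v : SemiVert n k // (v.1 : ℕ) % 2 = k % 2} K) := by
      apply MvPolynomial.algHom_ext
      intro u
      simp [hg, u.2]
    calc g (MvPolynomial.rename Subtype.val q)
        = (g.comp (MvPolynomial.rename (Subtype.val : {v : SemiVert n k // (v.1 : ℕ) % 2 = k % 2} → V))) q := rfl
      _ = q := by rw [this]; rfl
  have hgsurj : Function.Surjective g := fun q => ⟨MvPolynomial.rename Subtype.val q, hgsec q⟩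
  have hIker : ∀ a ∈ (I : Ideal R), g.toRingHom a = 0 := by
    have hsub : (I : Ideal R) ≤ RingHom.ker g.toRingHom := by
      rw [edgeIdeal, Ideal.span_le]
      rintro _ ⟨v, w, hadj, rfl⟩
      have hpar := SemiAux.adj_parity hadj
      rw [SetLike.mem_coe, RingHom.mem_ker]
      show g (X v * X w) = 0
      rw [map_mul]
      by_cases hv : (v.1 : ℕ) % 2 = k % 2
      · have hw : ¬ ((w.1 : ℕ) % 2 = k % 2) := fun hw => hpar ⟨fun _ => hw, fun _ => hv⟩
        simp [hg, aeval_X, hw]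
      · simp [hg, aeval_X, hv]
    intro a ha
    exact RingHom.mem_ker.mp (hsub ha)
  set ψ : R ⧸ I →+* MvPolynomial {v : SemiVert n k // (v.1 : ℕ) % 2 = k % 2} K := Ideal.Quotient.lift I g.toRingHom hIker with hψ
  have hψsurj : Function.Surjective ψ := by
    intro q
    obtain ⟨x, hx⟩ := hgsurj q
    exact ⟨Ideal.Quotient.mk I x, by rw [hψ, Ideal.Quotient.lift_mk]; exact hx⟩
  calc ((Nat.card {v : SemiVert n k // (v.1 : ℕ) % 2 = k % 2} : ℕ) : WithBot ℕ∞)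
      = (Fintype.card {v : SemiVert n k // (v.1 : ℕ) % 2 = k % 2} : WithBot ℕ∞) := by rw [Nat.card_eq_fintype_card]
    _ ≤ ringKrullDim (MvPolynomial {v : SemiVert n k // (v.1 : ℕ) % 2 = k % 2} K) := card_le_ringKrullDim_mvPolynomial _
    _ ≤ ringKrullDim (R ⧸ I) := ringKrullDim_le_of_surjective ψ hψsurj

end Assembly

theorem krullDim_semiTree_quotient (K : Type) [Field K] (n k : ℕ) (hn : 3 ≤ n) (hk : 1 ≤ k) :
    ringKrullDim (MvPolynomial (SemiVert n k) K ⧸ edgeIdeal K (semiTree n k)) =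
      ((((n - 1) ^ (k + 1) - 1) / (n - 2) : ℕ) : WithBot (WithTop ℕ)) := by
  have h1 := semi_upper K n k hn
  have h2 := semi_lower K n k hn
  rw [SemiAux.card_S n k hn] at h1 h2
  exact le_antisymm h1 h2
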